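/- Assume λ₂ > 0, X_i ≠ 0 for every column i, and ε > 0 satisfies ε < p λ₁ (‖X_i‖_r/(q λ₁))^{q/(q−1)} for every i. If β* ∈ ℝ^p is a generalized first-order stationary point of F_ε, then β* is a generalized first-order stationary point of F, and moreover for every i with β*_i ≠ 0 one has |β*_i| > (q λ₁ / ‖X_i‖_r)^{1/(1−q)}. -/

import Mathlib

/-- Index for the ℓ_r norm with r ∈ {1, 2, ∞}. -/
inductive LrIndex : Type
  | one | two | inf

/-- The ℓ_r norm on ℝ^n for r ∈ {1, 2, ∞}. -/
noncomputable def lrNorm {n : ℕ} (r : LrIndex) (z : Fin n → ℝ) : ℝ :=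
  match r with
  | .one => ∑ j, |z j|
  | .two => Real.sqrt (∑ j, (z j) ^ 2)
  | .inf => ⨆ j, |z j|

/-- `v` is a subgradient of `z ↦ ‖z − y‖_r` at `z₀`. -/
def IsSubgradAt {n : ℕ} (r : LrIndex) (y v z₀ : Fin n → ℝ) : Prop :=
  ∀ z : Fin n → ℝ,
    lrNorm r (z₀ - y) + ∑ j, v j * (z j - z₀ j) ≤ lrNorm r (z - y)

/-- The objective F(β) = ‖Xβ − y‖_r + λ₂‖β‖₂² + λ₁ Σᵢ |βᵢ|^q. -/
noncomputable def objF {n p : ℕ} (r : LrIndex) (X : Matrix (Fin n) (Fin p) ℝ)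
    (y : Fin n → ℝ) (lam1 lam2 q : ℝ) (β : Fin p → ℝ) : ℝ :=
  lrNorm r (X.mulVec β - y) + lam2 * ∑ i, (β i) ^ 2 + lam1 * ∑ i, |β i| ^ q

/-- `β` is a generalized first-order stationary point of F. -/
def IsGenStat {n p : ℕ} (r : LrIndex) (X : Matrix (Fin n) (Fin p) ℝ)
    (y : Fin n → ℝ) (lam1 lam2 q : ℝ) (β : Fin p → ℝ) : Prop :=
  ∃ v : Fin n → ℝ, IsSubgradAt r y v (X.mulVec β) ∧
    ∀ i : Fin p,
      β i * (∑ j, X j i * v j) + 2 * lam2 * (β i) ^ 2 + lam1 * q * |β i| ^ q = 0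

/-- The ε-approximation h_u of t ↦ |t|^q. -/
noncomputable def hApprox (q u t : ℝ) : ℝ :=
  if u ^ (1 / (q - 1)) ≤ |t| then |t| ^ q
  else q * u * |t| + (1 - q) * u ^ (q / (q - 1))

/-- The ε-approximation objective F_ε. -/
noncomputable def objFeps {n p : ℕ} (r : LrIndex) (X : Matrix (Fin n) (Fin p) ℝ)
    (y : Fin n → ℝ) (lam1 lam2 q ε : ℝ) (β : Fin p → ℝ) : ℝ :=
  lrNorm r (X.mulVec β - y) + lam2 * ∑ i, (β i) ^ 2
    + lam1 * ∑ i, hApprox q ((ε / (p * lam1)) ^ ((q - 1) / q)) (β i)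

/-- `β` is a generalized first-order stationary point of F_ε (with u_ε = uε). -/
def IsGenStatEps {n p : ℕ} (r : LrIndex) (X : Matrix (Fin n) (Fin p) ℝ)
    (y : Fin n → ℝ) (lam1 lam2 q uε : ℝ) (β : Fin p → ℝ) : Prop :=
  ∃ v : Fin n → ℝ, ∃ d : Fin p → ℝ,
    IsSubgradAt r y v (X.mulVec β) ∧
    (∀ i : Fin p, (∑ j, X j i * v j) + 2 * lam2 * β i + lam1 * d i = 0) ∧
    (∀ i : Fin p,
      (uε ^ (1 / (q - 1)) < |β i| →
        d i = q * |β i| ^ (q - 1) * Real.sign (β i)) ∧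
      (β i ≠ 0 → |β i| ≤ uε ^ (1 / (q - 1)) →
        d i = q * uε * Real.sign (β i)) ∧
      (β i = 0 → |d i| ≤ q * uε))

lemma lrNorm_neg {n : ℕ} (r : LrIndex) (z : Fin n → ℝ) :
    lrNorm r (-z) = lrNorm r z := by
  cases r <;> simp [lrNorm]

lemma lrNorm_triangle {n : ℕ} (r : LrIndex) (a b : Fin n → ℝ) :
    lrNorm r (a + b) ≤ lrNorm r a + lrNorm r b := by
  cases r with
  | one =>
    simp only [lrNorm, Pi.add_apply]
    calc ∑ j, |a j + b j| ≤ ∑ j, (|a j| + |b j|) :=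
          Finset.sum_le_sum fun j _ => abs_add_le _ _
      _ = _ := Finset.sum_add_distrib
  | two =>
    have key : ∀ z : Fin n → ℝ, lrNorm LrIndex.two z
        = ‖(WithLp.equiv 2 (Fin n → ℝ)).symm z‖ := by
      intro z
      rw [EuclideanSpace.norm_eq]
      simp only [lrNorm, WithLp.equiv_symm_apply, WithLp.ofLp_toLp, Real.norm_eq_abs, sq_abs]
    rw [key, key, key]
    exact norm_add_le _ _
  | inf =>
    rcases isEmpty_or_nonempty (Fin n) with he | hne
    · simp only [lrNorm, Real.iSup_of_isEmpty]; norm_num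
    · simp only [lrNorm, Pi.add_apply]
      refine ciSup_le fun j => ?_
      calc |a j + b j| ≤ |a j| + |b j| := abs_add_le _ _
        _ ≤ _ := add_le_add
            (le_ciSup (f := fun k => |a k|) (Set.Finite.bddAbove (Set.finite_range _)) j)
            (le_ciSup (f := fun k => |b k|) (Set.Finite.bddAbove (Set.finite_range _)) j)

lemma lrNorm_pos {n : ℕ} (r : LrIndex) (w : Fin n → ℝ) (hw : w ≠ 0) :
    0 < lrNorm r w := by
  obtain ⟨j, hj⟩ := Function.ne_iff.1 hw
  have hj' : (0 : ℝ) < |w j| := abs_pos.2 hj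
  cases r with
  | one =>
    exact Finset.sum_pos' (fun k _ => abs_nonneg _) ⟨j, Finset.mem_univ j, hj'⟩
  | two =>
    refine Real.sqrt_pos.2 (Finset.sum_pos' (fun k _ => sq_nonneg _)
      ⟨j, Finset.mem_univ j, ?_⟩)
    nlinarith [sq_abs (w j)]
  | inf =>
    exact lt_of_lt_of_le hj' (le_ciSup (f := fun k => |w k|) (Set.Finite.bddAbove (Set.finite_range _)) j)

lemma subgrad_pairing {n : ℕ} (r : LrIndex) (y v z₀ : Fin n → ℝ)
    (h : IsSubgradAt r y v z₀) (w : Fin n → ℝ) :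
    ∑ j, v j * w j ≤ lrNorm r w := by
  have h1 := h (z₀ + w)
  have h2 : z₀ + w - y = (z₀ - y) + w := by ext j; simp; ring
  rw [h2] at h1
  have h3 := lrNorm_triangle r (z₀ - y) w
  simp only [Pi.add_apply, add_sub_cancel_left] at h1
  linarith

lemma subgrad_abs_bound {n : ℕ} (r : LrIndex) (y v z₀ : Fin n → ℝ)
    (h : IsSubgradAt r y v z₀) (w : Fin n → ℝ) :
    |∑ j, v j * w j| ≤ lrNorm r w := by
  refine abs_le.2 ⟨?_, subgrad_pairing r y v z₀ h w⟩
  have := subgrad_pairing r y v z₀ h (-w)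
  rw [lrNorm_neg] at this
  simp only [Pi.neg_apply, mul_neg, Finset.sum_neg_distrib] at this
  linarith

lemma abs_lin_sign (a b β : ℝ) (ha : 0 ≤ a) (hb : 0 ≤ b) (hβ : β ≠ 0) :
    |a * β + b * Real.sign β| = a * |β| + b := by
  rcases hβ.lt_or_gt with h | h
  · rw [Real.sign_of_neg h, abs_of_neg h, abs_of_nonpos (by nlinarith)]; ring
  · rw [Real.sign_of_pos h, abs_of_pos h, abs_of_nonneg (by nlinarith)]; ring

lemma mul_sign_self (β : ℝ) (hβ : β ≠ 0) : β * Real.sign β = |β| := by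
  rcases hβ.lt_or_gt with h | h
  · rw [Real.sign_of_neg h, abs_of_neg h]; ring
  · rw [Real.sign_of_pos h, abs_of_pos h]; ring

/-- a generalized first-order stationary point of F_ε is one of F,
and its nonzero entries obey the lower bound. -/
theorem eps_stationary_is_stationary {n p : ℕ} (hn : 0 < n) (hp : 0 < p)
    (r : LrIndex) (X : Matrix (Fin n) (Fin p) ℝ) (y : Fin n → ℝ)
    (lam1 lam2 q ε : ℝ) (hlam1 : 0 < lam1) (hlam2 : 0 < lam2)
    (hq0 : 0 < q) (hq1 : q < 1)
    (hX : ∀ i : Fin p, (fun j => X j i) ≠ (0 : Fin n → ℝ))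
    (hε : 0 < ε)
    (hεb : ∀ i : Fin p,
      ε < (p : ℝ) * lam1 * (lrNorm r (fun j => X j i) / (q * lam1)) ^ (q / (q - 1)))
    (βs : Fin p → ℝ)
    (hstat : IsGenStatEps r X y lam1 lam2 q ((ε / (p * lam1)) ^ ((q - 1) / q)) βs) :
    IsGenStat r X y lam1 lam2 q βs ∧
    ∀ i : Fin p, βs i ≠ 0 →
      (q * lam1 / lrNorm r (fun j => X j i)) ^ (1 / (1 - q)) < |βs i| := by
  obtain ⟨v, d, hsub, hlin, hd⟩ := hstat
  set u : ℝ := (ε / (p * lam1)) ^ ((q - 1) / q) with hu_def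
  have hp' : (0 : ℝ) < p := by exact_mod_cast hp
  have hratio : 0 < ε / (p * lam1) := div_pos hε (by positivity)
  have hu : 0 < u := Real.rpow_pos_of_pos hratio _
  have hq1' : q - 1 < 0 := by linarith
  -- dual bound
  have hdual : ∀ i : Fin p, |∑ j, X j i * v j| ≤ lrNorm r (fun j => X j i) := by
    intro i
    have := subgrad_abs_bound r y v (X.mulVec βs) hsub (fun j => X j i)
    simpa [mul_comm] using this
  have hNpos : ∀ i : Fin p, 0 < lrNorm r (fun j => X j i) := fun i =>
    lrNorm_pos r _ (hX i)
  -- Step C : lrNorm X_i < lam1 * q * u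
  have hC : ∀ i : Fin p, lrNorm r (fun j => X j i) < lam1 * q * u := by
    intro i
    set N := lrNorm r (fun j => X j i) with hN
    have hNp := hNpos i
    have hA : 0 < N / (q * lam1) := by positivity
    have h1 : ε / (p * lam1) < (N / (q * lam1)) ^ (q / (q - 1)) := by
      rw [div_lt_iff₀ (by positivity)]
      calc ε < (p : ℝ) * lam1 * (N / (q * lam1)) ^ (q / (q - 1)) := hεb i
        _ = (N / (q * lam1)) ^ (q / (q - 1)) * ((p : ℝ) * lam1) := by ring
    have h2 : ((N / (q * lam1)) ^ (q / (q - 1))) ^ ((q - 1) / q)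
        < (ε / (p * lam1)) ^ ((q - 1) / q) :=
      Real.rpow_lt_rpow_of_neg hratio h1 (by
        apply div_neg_of_neg_of_pos hq1' hq0)
    have h3 : ((N / (q * lam1)) ^ (q / (q - 1))) ^ ((q - 1) / q) = N / (q * lam1) := by
      rw [← Real.rpow_mul hA.le]
      have he : q / (q - 1) * ((q - 1) / q) = 1 := by
        have h1 : q ≠ 0 := hq0.ne'
        have h2 : q - 1 ≠ 0 := by linarith
        field_simp
      rw [he, Real.rpow_one]
    rw [h3] at h2
    rw [div_lt_iff₀ (by positivity)] at h2
    calc N < u * (q * lam1) := h2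
      _ = lam1 * q * u := by ring
  -- Step B : nonzero entries are in the big regime
  have hbig : ∀ i : Fin p, βs i ≠ 0 → u ^ (1 / (q - 1)) < |βs i| := by
    intro i hne
    by_contra hle
    push_neg at hle
    have hdi := (hd i).2.1 hne hle
    have hSi := hlin i
    have hS : ∑ j, X j i * v j = -(2 * lam2 * βs i + (lam1 * (q * u)) * Real.sign (βs i)) := by
      rw [hdi] at hSi; linarith [hSi]; 
    have habs : |∑ j, X j i * v j| = 2 * lam2 * |βs i| + lam1 * (q * u) := by
      rw [hS, abs_neg]
      exact abs_lin_sign (2 * lam2) (lam1 * (q * u)) (βs i) (by positivity)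
        (by positivity) hne
    have h1 := hdual i
    have h2 := hC i
    have h3 : 0 < 2 * lam2 * |βs i| := by
      have := abs_pos.2 hne; positivity
    rw [habs] at h1
    nlinarith
  constructor
  · -- stationary point of F
    refine ⟨v, hsub, fun i => ?_⟩
    by_cases hne : βs i = 0
    · rw [hne]
      simp [Real.zero_rpow hq0.ne']
    · have hdi := (hd i).1 (hbig i hne)
      have hβd : βs i * d i = q * |βs i| ^ q := by
        rw [hdi]
        have h1 : βs i * (q * |βs i| ^ (q - 1) * Real.sign (βs i))
            = q * |βs i| ^ (q - 1) * (βs i * Real.sign (βs i)) := by ring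
        rw [h1, mul_sign_self (βs i) hne]
        have h2 : |βs i| ^ q = |βs i| ^ (q - 1) * |βs i| := by
          rw [← Real.rpow_add_one (abs_ne_zero.2 hne) (q - 1)]
          norm_num
        rw [h2]; ring
      have hSi := hlin i
      linear_combination βs i * hSi - lam1 * hβd
  · -- lower bound on nonzero entries
    intro i hne
    set N := lrNorm r (fun j => X j i) with hN
    have hNp := hNpos i
    have habsβ : 0 < |βs i| := abs_pos.2 hne
    have hdi := (hd i).1 (hbig i hne)
    have hSi := hlin i
    have hS : ∑ j, X j i * v j
        = -(2 * lam2 * βs i + (lam1 * (q * |βs i| ^ (q - 1))) * Real.sign (βs i)) := by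
      rw [hdi] at hSi; linarith [hSi]
    have hrpos : (0 : ℝ) < |βs i| ^ (q - 1) := Real.rpow_pos_of_pos habsβ _
    have habs : |∑ j, X j i * v j|
        = 2 * lam2 * |βs i| + lam1 * (q * |βs i| ^ (q - 1)) := by
      rw [hS, abs_neg]
      exact abs_lin_sign (2 * lam2) (lam1 * (q * |βs i| ^ (q - 1))) (βs i)
        (by positivity) (by positivity) hne
    have h1 := hdual i
    rw [habs] at h1
    have hkey : lam1 * (q * |βs i| ^ (q - 1)) < N := by nlinarith
    -- s * t = 1 with s = |β|^(q-1), t = |β|^(1-q)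
    have htpos : (0 : ℝ) < |βs i| ^ (1 - q) := Real.rpow_pos_of_pos habsβ _
    have hst : |βs i| ^ (q - 1) * |βs i| ^ (1 - q) = 1 := by
      rw [← Real.rpow_add habsβ]
      norm_num
    have h4 : q * lam1 / N < |βs i| ^ (1 - q) := by
      rw [div_lt_iff₀ hNp]
      nlinarith [mul_lt_mul_of_pos_right hkey htpos]
    have h5 : (q * lam1 / N) ^ (1 / (1 - q)) < (|βs i| ^ (1 - q)) ^ (1 / (1 - q)) :=
      Real.rpow_lt_rpow (by positivity) h4 (by
        apply div_pos one_pos; linarith)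
    have h6 : (|βs i| ^ (1 - q)) ^ (1 / (1 - q)) = |βs i| := by
      rw [← Real.rpow_mul (abs_nonneg _), mul_one_div, div_self (by linarith : (1:ℝ) - q ≠ 0),
        Real.rpow_one]
    rw [h6] at h5
    exact h5
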